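/- Let λ : ℕ → ℝ be a bounded sequence, L > 0, I a countable index set, and g : I → ℓ²(ℕ, ℂ). Suppose there exists C > 0 such that for every f ∈ ℓ²(ℕ, ℂ), ∑_{i∈I} ∫₀ᴸ |∑_{n=0}^∞ conj(f(n))·(λ(n))^t·g_i(n)|² dt ≥ C‖f‖² (a lower semi-continuous frame bound for the system {D^t g_i : i ∈ I, t ∈ [0, L]}). Then ∑_{i∈I} ‖g_i‖² = ∞, i.e., the family (‖g_i‖²)_{i∈I} is not summable. -/

import Mathlib

/-- If the semi-continuous system `{D^t gᵢ : i ∈ I, t ∈ [0,L]}` generated by a bounded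
diagonal operator `D` (with real diagonal `lam`) on `ℓ²(ℕ, ℂ)` satisfies a lower frame
bound, then `∑ᵢ ‖gᵢ‖² = ∞`. -/
theorem diagonal_lower_frame_bound_implies_not_summable
    (lam : ℕ → ℝ) (hlam : ∃ M : ℝ, ∀ n : ℕ, |lam n| ≤ M)
    (L : ℝ) (hL : 0 < L)
    {I : Type*} [Countable I] (g : I → lp (fun _ : ℕ => ℂ) 2)
    (C : ℝ) (hC : 0 < C)
    (hlow : ∀ f : lp (fun _ : ℕ => ℂ) 2,
      C * ‖f‖ ^ 2 ≤ ∑' i : I, ∫ t in (0 : ℝ)..L,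
        ‖∑' n : ℕ, (starRingEnd ℂ) (f n) * ((lam n : ℂ) ^ (t : ℂ)) * g i n‖ ^ 2) :
    ¬ Summable (fun i : I => ‖g i‖ ^ 2) := by
  intro hsum
  obtain ⟨M, hM⟩ := hlam
  set M' : ℝ := max M 1 with hM'def
  have hM'1 : (1:ℝ) ≤ M' := le_max_right _ _
  set B : ℝ := M' ^ L with hBdef
  have hB1 : (1:ℝ) ≤ B := Real.one_le_rpow hM'1 hL.le
  have hB0 : (0:ℝ) < B := lt_of_lt_of_le one_pos hB1
  -- bound on the norm of the complex power
  have habs : ∀ m : ℕ, ∀ t ∈ Set.Ioc (0:ℝ) L, ‖((lam m : ℂ)) ^ (t:ℂ)‖ ≤ B := by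
    intro m t ht
    by_cases h0 : (lam m : ℂ) = 0
    · rw [h0, Complex.zero_cpow (by exact_mod_cast ht.1.ne')]
      simpa using (le_trans zero_le_one hB1)
    · have h1 : ‖(lam m : ℂ) ^ (t:ℂ)‖ = |lam m| ^ t := by
        rw [Complex.norm_cpow_of_ne_zero h0]
        simp
      rw [h1]
      calc |lam m| ^ t ≤ M' ^ t :=
            Real.rpow_le_rpow (abs_nonneg _) ((hM m).trans (le_max_left _ _)) ht.1.le
        _ ≤ M' ^ L := Real.rpow_le_rpow_of_exponent_le hM'1 ht.2
  set a : ℕ → ℝ := fun m => ∑' i : I, ‖g i m‖ ^ 2 with hadef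
  -- summability of coordinates
  have hsm : ∀ m : ℕ, Summable fun i : I => ‖g i m‖ ^ 2 := by
    intro m
    refine Summable.of_nonneg_of_le (fun i => sq_nonneg _) (fun i => ?_) hsum
    exact pow_le_pow_left₀ (norm_nonneg _) (lp.norm_apply_le_norm two_ne_zero (g i) m) 2
  -- the key estimate from the frame bound applied to basis vectors
  have key : ∀ m : ℕ, C ≤ (B ^ 2 * L) * a m := by
    intro m
    set f : lp (fun _ : ℕ => ℂ) 2 := lp.single 2 m (1:ℂ) with hfdef
    have hfnorm : ‖f‖ = 1 := by
      have := lp.norm_single (p := 2) (E := fun _ : ℕ => ℂ) (by norm_num) m (1:ℂ)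
      exact this.trans norm_one
    have hts : ∀ (i : I) (t : ℝ),
        (∑' n : ℕ, (starRingEnd ℂ) (f n) * ((lam n : ℂ) ^ (t : ℂ)) * g i n)
          = ((lam m : ℂ) ^ (t:ℂ)) * g i m := by
      intro i t
      rw [tsum_eq_single m (fun n hn => by
        simp [hfdef, lp.single_apply, hn])]
      simp [hfdef, lp.single_apply]
    have hint : ∀ i : I, ∫ t in (0:ℝ)..L,
        ‖∑' n : ℕ, (starRingEnd ℂ) (f n) * ((lam n : ℂ) ^ (t : ℂ)) * g i n‖ ^ 2
          ≤ (B ^ 2 * ‖g i m‖ ^ 2) * L := by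
      intro i
      have hb : ∀ t ∈ Set.uIoc (0:ℝ) L,
          ‖‖∑' n : ℕ, (starRingEnd ℂ) (f n) * ((lam n : ℂ) ^ (t : ℂ)) * g i n‖ ^ 2‖
            ≤ B ^ 2 * ‖g i m‖ ^ 2 := by
        intro t ht
        rw [Set.uIoc_of_le hL.le] at ht
        rw [Real.norm_of_nonneg (sq_nonneg _), hts i t, norm_mul, mul_pow]
        have := habs m t ht
        gcongr
      have h2 := intervalIntegral.norm_integral_le_of_norm_le_const hb
      rw [sub_zero, abs_of_pos hL] at h2
      exact (le_abs_self _).trans h2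
    have hsum2 : Summable fun i : I => (B ^ 2 * ‖g i m‖ ^ 2) * L :=
      ((hsm m).mul_left _).mul_right _
    have hsum1 : Summable fun i : I => ∫ t in (0:ℝ)..L,
        ‖∑' n : ℕ, (starRingEnd ℂ) (f n) * ((lam n : ℂ) ^ (t : ℂ)) * g i n‖ ^ 2 := by
      refine Summable.of_nonneg_of_le (fun i => ?_) hint hsum2
      exact intervalIntegral.integral_nonneg hL.le (fun t _ => sq_nonneg _)
    have hle := hsum1.tsum_le_tsum hint hsum2
    have h3 : ∑' i : I, (B ^ 2 * ‖g i m‖ ^ 2) * L = (B ^ 2 * L) * a m := by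
      rw [tsum_mul_right, tsum_mul_left, hadef]
      ring
    calc C = C * ‖f‖ ^ 2 := by rw [hfnorm]; ring
      _ ≤ _ := hlow f
      _ ≤ ∑' i : I, (B ^ 2 * ‖g i m‖ ^ 2) * L := hle
      _ = (B ^ 2 * L) * a m := h3
  -- summability of a via Fubini for sums
  have hcoord : ∀ i : I, Summable fun m : ℕ => ‖g i m‖ ^ 2 := by
    intro i
    have := (lp.memℓp (g i)).summable (p := 2) (by norm_num)
    simpa [ENNReal.toReal_ofNat, Real.rpow_natCast] using this
  have hnorm2 : ∀ i : I, ‖g i‖ ^ 2 = ∑' m : ℕ, ‖g i m‖ ^ 2 := by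
    intro i
    have := lp.norm_rpow_eq_tsum (p := 2) (by norm_num) (g i)
    simpa [ENNReal.toReal_ofNat, Real.rpow_natCast] using this
  have hF : Summable (fun p : I × ℕ => ‖g p.1 p.2‖ ^ 2) := by
    refine (summable_prod_of_nonneg (fun p => sq_nonneg _)).2 ⟨hcoord, ?_⟩
    simpa only [← hnorm2] using hsum
  have hFs : Summable (fun p : ℕ × I => ‖g p.2 p.1‖ ^ 2) := hF.prod_symm
  have ha : Summable a := ((summable_prod_of_nonneg (fun p => sq_nonneg _)).1 hFs).2
  -- contradiction: a m is bounded below by a positive constant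
  have hc : 0 < C / (B ^ 2 * L) := div_pos hC (by positivity)
  obtain ⟨m, hm⟩ := (ha.tendsto_atTop_zero.eventually (gt_mem_nhds hc)).exists
  have : C / (B ^ 2 * L) ≤ a m := (div_le_iff₀' (by positivity)).2 (key m)
  exact absurd (this.trans_lt hm) (lt_irrefl _)
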